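/- For every n ≥ 1 and all i, j ≥ 0, the coefficient of the monomial x^{2i+1} y^{2j} z^{2n−2i−2j} in D_J^{2n}(x) (an element of the polynomial ring ℤ[x,y,z]) equals the number of permutations π of [2n] with cpk^o(π) = i and cpk^e(π) = j. -/
import Mathlib


open Finset MvPolynomial

/-- Number of odd cycle peaks of a permutation of `[n]` (the element `i : Fin n`
represents the value `i+1 ∈ {1,…,n}`). -/
def cpko (n : ℕ) (π : Equiv.Perm (Fin n)) : ℕ :=
  (Finset.univ.filter fun i : Fin n => π.symm i < i ∧ π i < i ∧ Odd ((i : ℕ) + 1)).card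

/-- Number of even cycle peaks of a permutation of `[n]`. -/
def cpke (n : ℕ) (π : Equiv.Perm (Fin n)) : ℕ :=
  (Finset.univ.filter fun i : Fin n => π.symm i < i ∧ π i < i ∧ Even ((i : ℕ) + 1)).card

/-- The derivation `D_J` on `ℤ[x,y,z]` with `D_J(x) = yz`, `D_J(y) = xz`, `D_J(z) = xy`
(variables `x = X 0`, `y = X 1`, `z = X 2`). -/
noncomputable def DJ : Derivation ℤ (MvPolynomial (Fin 3) ℤ) (MvPolynomial (Fin 3) ℤ) :=
  MvPolynomial.mkDerivation ℤ ![X 1 * X 2, X 0 * X 2, X 0 * X 1]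

/- ### Auxiliary material -/

open Equiv

noncomputable def sgl (a b c : ℕ) : Fin 3 →₀ ℕ :=
  Finsupp.single 0 a + Finsupp.single 1 b + Finsupp.single 2 c

lemma sgl_apply0 (a b c : ℕ) : sgl a b c 0 = a := by simp [sgl, Finsupp.single_apply]
lemma sgl_apply1 (a b c : ℕ) : sgl a b c 1 = b := by simp [sgl, Finsupp.single_apply]
lemma sgl_apply2 (a b c : ℕ) : sgl a b c 2 = c := by simp [sgl, Finsupp.single_apply]

lemma sgl_congr {a b c a' b' c' : ℕ} (h1 : a = a') (h2 : b = b') (h3 : c = c') :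
    sgl a b c = sgl a' b' c' := by rw [h1, h2, h3]

lemma DJ_mono (a b c : ℕ) :
    DJ (monomial (sgl a b c) 1) =
      monomial (sgl (a-1) (b+1) (c+1)) (a : ℤ) + monomial (sgl (a+1) (b-1) (c+1)) (b : ℤ) +
        monomial (sgl (a+1) (b+1) (c-1)) (c : ℤ) := by
  rw [DJ, mkDerivation_monomial, one_smul]
  rw [Finsupp.sum_fintype _ _ (by intro i; simp)]
  rw [Fin.sum_univ_three]
  congr 1
  · congr 1
    · -- variable 0 term
      rw [sgl_apply0]
      rcases Nat.eq_zero_or_pos a with h | h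
      · simp [h]
      · have hx : (X 1 * X 2 : MvPolynomial (Fin 3) ℤ) = monomial (Finsupp.single 1 1 + Finsupp.single 2 1) 1 := by
          rw [X, X, monomial_mul, one_mul]
        rw [hx]; simp only [Matrix.cons_val_zero, Matrix.cons_val_one, Matrix.head_cons, Matrix.cons_val_two, Matrix.tail_cons, smul_eq_mul]; have he : sgl a b c - Finsupp.single 0 1 + (Finsupp.single 1 1 + Finsupp.single 2 1) = sgl (a-1) (b+1) (c+1) := by
          ext v
          fin_cases v <;> simp [sgl, Finsupp.single_apply, Finsupp.tsub_apply] <;> omega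
        rw [monomial_mul, mul_one, he]
    · rw [sgl_apply1]
      rcases Nat.eq_zero_or_pos b with h | h
      · simp [h]
      · have hx : (X 0 * X 2 : MvPolynomial (Fin 3) ℤ) = monomial (Finsupp.single 0 1 + Finsupp.single 2 1) 1 := by
          rw [X, X, monomial_mul, one_mul]
        rw [hx]; simp only [Matrix.cons_val_zero, Matrix.cons_val_one, Matrix.head_cons, Matrix.cons_val_two, Matrix.tail_cons, smul_eq_mul]; have he : sgl a b c - Finsupp.single 1 1 + (Finsupp.single 0 1 + Finsupp.single 2 1) = sgl (a+1) (b-1) (c+1) := by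
          ext v
          fin_cases v <;> simp [sgl, Finsupp.single_apply, Finsupp.tsub_apply] <;> omega
        rw [monomial_mul, mul_one, he]
  · rw [sgl_apply2]
    rcases Nat.eq_zero_or_pos c with h | h
    · simp [h]
    · have hx : (X 0 * X 1 : MvPolynomial (Fin 3) ℤ) = monomial (Finsupp.single 0 1 + Finsupp.single 1 1) 1 := by
        rw [X, X, monomial_mul, one_mul]
      rw [hx]; simp only [Matrix.cons_val_zero, Matrix.cons_val_one, Matrix.head_cons, Matrix.cons_val_two, Matrix.tail_cons, smul_eq_mul]; have he : sgl a b c - Finsupp.single 2 1 + (Finsupp.single 0 1 + Finsupp.single 1 1) = sgl (a+1) (b+1) (c-1) := by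
        ext v
        fin_cases v <;> simp [sgl, Finsupp.single_apply, Finsupp.tsub_apply] <;> omega
      rw [monomial_mul, mul_one, he]

/- ### Insertion of a new maximum into a permutation -/

noncomputable def insE (m : ℕ) : Perm (Fin (m+1)) ≃ (Option (Fin m) × Perm (Fin m)) :=
  (finSuccEquivLast.permCongr).trans Equiv.Perm.decomposeOption

noncomputable def ins {m : ℕ} (c : Option (Fin m)) (π : Perm (Fin m)) : Perm (Fin (m+1)) :=
  (insE m).symm (c, π)

lemma ins_apply {m : ℕ} (c : Option (Fin m)) (π : Perm (Fin m)) (x : Fin (m+1)) :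
    ins c π x = finSuccEquivLast.symm ((swap none c * π.optionCongr) (finSuccEquivLast x)) := by
  rfl

lemma ins_none_castSucc {m : ℕ} (π : Perm (Fin m)) (i : Fin m) :
    ins none π i.castSucc = (π i).castSucc := by
  simp [ins_apply, swap_self]

lemma ins_none_last {m : ℕ} (π : Perm (Fin m)) :
    ins none π (Fin.last m) = Fin.last m := by
  simp [ins_apply, swap_self]

lemma ins_some_castSucc {m : ℕ} (π : Perm (Fin m)) (k i : Fin m) :
    ins (some k) π i.castSucc = if π i = k then Fin.last m else (π i).castSucc := by
  by_cases h : π i = k <;>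
    simp [ins_apply, swap_apply_def, h]

lemma ins_some_last {m : ℕ} (π : Perm (Fin m)) (k : Fin m) :
    ins (some k) π (Fin.last m) = k.castSucc := by
  simp [ins_apply]

lemma ins_none_symm_castSucc {m : ℕ} (π : Perm (Fin m)) (i : Fin m) :
    (ins none π).symm i.castSucc = (π.symm i).castSucc := by
  rw [Equiv.symm_apply_eq, ins_none_castSucc, Equiv.apply_symm_apply]

lemma ins_none_symm_last {m : ℕ} (π : Perm (Fin m)) :
    (ins none π).symm (Fin.last m) = Fin.last m := by
  rw [Equiv.symm_apply_eq, ins_none_last]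

lemma ins_some_symm_castSucc {m : ℕ} (π : Perm (Fin m)) (k i : Fin m) :
    (ins (some k) π).symm i.castSucc =
      if i = k then Fin.last m else (π.symm i).castSucc := by
  rw [Equiv.symm_apply_eq]
  by_cases h : i = k
  · simp [h, ins_some_last]
  · rw [if_neg h, ins_some_castSucc, if_neg (by simp [h]), Equiv.apply_symm_apply]

lemma ins_some_symm_last {m : ℕ} (π : Perm (Fin m)) (k : Fin m) :
    (ins (some k) π).symm (Fin.last m) = (π.symm k).castSucc := by
  rw [Equiv.symm_apply_eq, ins_some_castSucc, if_pos (Equiv.apply_symm_apply _ _)]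

/- ### How insertion changes cycle-peak counts -/

section cpkQ
variable (Q : ℕ → Prop) [DecidablePred Q]

def cpk (n : ℕ) (π : Perm (Fin n)) : ℕ :=
  (Finset.univ.filter fun i : Fin n => π.symm i < i ∧ π i < i ∧ Q ((i : ℕ) + 1)).card

lemma cpk_ins_none {m : ℕ} (π : Perm (Fin m)) : cpk Q (m+1) (ins none π) = cpk Q m π := by
  unfold cpk
  rw [card_filter, card_filter, Fin.sum_univ_castSucc]
  have h1 : (if (ins none π).symm (Fin.last m) < Fin.last m ∧ ins none π (Fin.last m) < Fin.last m
      ∧ Q ((Fin.last m : ℕ) + 1) then 1 else 0) = 0 := by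
    simp [ins_none_symm_last]
  rw [h1, add_zero]
  refine Finset.sum_congr rfl fun i _ => ?_
  simp only [ins_none_symm_castSucc, ins_none_castSucc, Fin.castSucc_lt_castSucc_iff,
    Fin.coe_castSucc]

lemma cpk_ins_some {m : ℕ} (π : Perm (Fin m)) (k : Fin m) :
    cpk Q (m+1) (ins (some k) π)
      + (if (π.symm k < k ∧ π k < k ∧ Q ((k : ℕ)+1))
           ∨ (π.symm (π.symm k) < π.symm k ∧ k < π.symm k ∧ Q ((π.symm k : ℕ)+1)) then 1 else 0)
      = cpk Q m π + (if Q (m+1) then 1 else 0) := by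
  classical
  set p := π.symm k with hp
  set s := (Finset.univ.filter fun i : Fin m => π.symm i < i ∧ π i < i ∧ Q ((i : ℕ) + 1)) with hs
  have hcount : cpk Q (m+1) (ins (some k) π)
      = ((s.erase k).erase p).card + (if Q (m+1) then 1 else 0) := by
    unfold cpk
    rw [card_filter, Fin.sum_univ_castSucc]
    have h1 : (if (ins (some k) π).symm (Fin.last m) < Fin.last m
        ∧ ins (some k) π (Fin.last m) < Fin.last m ∧ Q ((Fin.last m : ℕ) + 1) then 1 else 0)
        = (if Q (m+1) then 1 else 0) := by
      simp [ins_some_symm_last, ins_some_last, Fin.castSucc_lt_last, Fin.val_last]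
    rw [h1]
    congr 1
    have h2 : ∀ i : Fin m,
        ((ins (some k) π).symm i.castSucc < i.castSucc ∧ ins (some k) π i.castSucc < i.castSucc
          ∧ Q ((i.castSucc : ℕ) + 1))
        ↔ (i ≠ p ∧ i ≠ k ∧ (π.symm i < i ∧ π i < i ∧ Q ((i : ℕ) + 1))) := by
      intro i
      rw [ins_some_symm_castSucc, ins_some_castSucc]
      by_cases hik : i = k
      · simp [hik, Fin.not_lt.2 (Fin.le_last _)]
      · rw [if_neg hik]
        by_cases hip : i = p
        · have hpik : π i = k := by rw [hip, hp]; exact Equiv.apply_symm_apply _ _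
          rw [if_pos hpik]
          simp [hip, Fin.not_lt.2 (Fin.le_last _)]
        · have : π i ≠ k := fun h => hip (by rw [hp, ← h, Equiv.symm_apply_apply])
          simp [this, hik, hip, Fin.castSucc_lt_castSucc_iff]
    calc (∑ i : Fin m, if (ins (some k) π).symm i.castSucc < i.castSucc
            ∧ ins (some k) π i.castSucc < i.castSucc ∧ Q ((i.castSucc : ℕ) + 1) then 1 else 0)
        = ∑ i : Fin m, if (i ≠ p ∧ i ≠ k ∧ (π.symm i < i ∧ π i < i ∧ Q ((i : ℕ) + 1)))
            then 1 else 0 := Finset.sum_congr rfl fun i _ => by rw [if_congr (h2 i) rfl rfl]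
      _ = ((s.erase k).erase p).card := by
          have herase : (s.erase k).erase p
              = Finset.univ.filter (fun i : Fin m =>
                  i ≠ p ∧ i ≠ k ∧ ((Equiv.symm π) i < i ∧ π i < i ∧ Q ((i : ℕ) + 1))) := by
            ext i
            simp only [Finset.mem_filter, Finset.mem_erase, Finset.mem_univ, true_and, hs]
            all_goals tauto
          rw [herase, card_filter]
  have hexcl : ¬ (k ∈ s ∧ p ∈ s) := by
    rintro ⟨hk, hpp⟩
    rw [hs] at hk hpp
    simp only [Finset.mem_filter, Finset.mem_univ, true_and] at hk hpp
    have h1 : p < k := hk.1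
    have h2 : π p < p := hpp.2.1
    rw [hp, Equiv.apply_symm_apply] at h2
    exact absurd h1 (not_lt.2 h2.le)
  have hindic : (if (π.symm k < k ∧ π k < k ∧ Q ((k : ℕ)+1))
      ∨ (π.symm (π.symm k) < π.symm k ∧ k < π.symm k ∧ Q ((π.symm k : ℕ)+1)) then 1 else 0)
      = (if k ∈ s then 1 else 0) + (if p ∈ s then 1 else 0) := by
    have hks : k ∈ s ↔ (π.symm k < k ∧ π k < k ∧ Q ((k : ℕ)+1)) := by
      rw [hs]; simp
    have hps : p ∈ s ↔ (π.symm (π.symm k) < π.symm k ∧ k < π.symm k ∧ Q ((π.symm k : ℕ)+1)) := by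
      rw [hs]
      simp only [Finset.mem_filter, Finset.mem_univ, true_and, hp, Equiv.apply_symm_apply]
    by_cases h1 : k ∈ s <;> by_cases h2 : p ∈ s
    · exact absurd ⟨h1, h2⟩ hexcl
    · rw [if_pos (Or.inl (hks.1 h1)), if_pos h1, if_neg h2]
    · rw [if_pos (Or.inr (hps.1 h2)), if_neg h1, if_pos h2]
    · rw [if_neg, if_neg h1, if_neg h2]
      rw [hks] at h1; rw [hps] at h2; tauto
  rw [hcount, hindic]
  have hcard : ((s.erase k).erase p).card + (if k ∈ s then 1 else 0) + (if p ∈ s then 1 else 0)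
      = s.card := by
    by_cases h1 : k ∈ s <;> by_cases h2 : p ∈ s
    · exact absurd ⟨h1, h2⟩ hexcl
    · have hkp : p ≠ k := by
        intro h; rw [h] at h2; exact h2 h1
      rw [Finset.erase_eq_of_notMem (fun h => h2 (Finset.mem_of_mem_erase h))]
      rw [Finset.card_erase_of_mem h1, if_pos h1, if_neg h2]
      have := Finset.card_pos.2 ⟨k, h1⟩
      omega
    · rw [Finset.erase_eq_of_notMem h1, Finset.card_erase_of_mem h2, if_neg h1, if_pos h2]
      have := Finset.card_pos.2 ⟨p, h2⟩
      omega
    · rw [Finset.erase_eq_of_notMem h1,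
        Finset.erase_eq_of_notMem h2, if_neg h1, if_neg h2]
      omega
  unfold cpk
  rw [← hs]
  omega

end cpkQ

lemma cpko_eq_cpk (n : ℕ) (π : Perm (Fin n)) : cpko n π = cpk Odd n π := rfl
lemma cpke_eq_cpk (n : ℕ) (π : Perm (Fin n)) : cpke n π = cpk Even n π := rfl

/- ### Slot sets and their cardinalities -/

section cards
variable {m : ℕ} (π : Perm (Fin m))

def pkO : Finset (Fin m) :=
  Finset.univ.filter fun i : Fin m => π.symm i < i ∧ π i < i ∧ Odd ((i : ℕ) + 1)
def pkE : Finset (Fin m) :=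
  Finset.univ.filter fun i : Fin m => π.symm i < i ∧ π i < i ∧ Even ((i : ℕ) + 1)

lemma cpko_eq : cpko m π = (pkO π).card := rfl
lemma cpke_eq : cpke m π = (pkE π).card := rfl

def slA : Finset (Fin m) := pkO π ∪ (pkO π).image π
def slB : Finset (Fin m) := pkE π ∪ (pkE π).image π

lemma image_not_peak {x y : Fin m} (hx : π.symm x < x ∧ π x < x)
    (hy : π.symm y < y ∧ π y < y) : π y ≠ x := by
  intro h
  have h1 : π.symm x = y := by rw [← h, Equiv.symm_apply_apply]
  have h2 : y < x := h1 ▸ hx.1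
  have h3 : x < y := h ▸ hy.2
  exact absurd h2 (not_lt.2 h3.le)

lemma disj_pkO_img : Disjoint (pkO π) ((pkO π).image π) := by
  rw [Finset.disjoint_left]
  intro x hx hximg
  rw [Finset.mem_image] at hximg
  obtain ⟨y, hy, hyx⟩ := hximg
  rw [pkO, Finset.mem_filter] at hx hy
  exact image_not_peak π ⟨hx.2.1, hx.2.2.1⟩ ⟨hy.2.1, hy.2.2.1⟩ hyx

lemma disj_pkE_img : Disjoint (pkE π) ((pkE π).image π) := by
  rw [Finset.disjoint_left]
  intro x hx hximg
  rw [Finset.mem_image] at hximg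
  obtain ⟨y, hy, hyx⟩ := hximg
  rw [pkE, Finset.mem_filter] at hx hy
  exact image_not_peak π ⟨hx.2.1, hx.2.2.1⟩ ⟨hy.2.1, hy.2.2.1⟩ hyx

lemma card_slA : (slA π).card = 2 * cpko m π := by
  rw [slA, Finset.card_union_of_disjoint (disj_pkO_img π),
    Finset.card_image_of_injective _ π.injective, cpko_eq]
  omega

lemma card_slB : (slB π).card = 2 * cpke m π := by
  rw [slB, Finset.card_union_of_disjoint (disj_pkE_img π),
    Finset.card_image_of_injective _ π.injective, cpke_eq]
  omega

lemma disj_pkO_pkE : Disjoint (pkO π) (pkE π) := by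
  rw [Finset.disjoint_left]
  intro x hx hy
  rw [pkO, Finset.mem_filter] at hx
  rw [pkE, Finset.mem_filter] at hy
  exact (Nat.not_even_iff_odd.2 hx.2.2.2) hy.2.2.2

lemma disj_slA_slB : Disjoint (slA π) (slB π) := by
  rw [slA, slB, Finset.disjoint_union_left]
  constructor <;> rw [Finset.disjoint_union_right]
  · refine ⟨disj_pkO_pkE π, ?_⟩
    rw [Finset.disjoint_left]
    intro x hx hy
    rw [Finset.mem_image] at hy
    obtain ⟨y, hy, hyx⟩ := hy
    rw [pkO, Finset.mem_filter] at hx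
    rw [pkE, Finset.mem_filter] at hy
    exact image_not_peak π ⟨hx.2.1, hx.2.2.1⟩ ⟨hy.2.1, hy.2.2.1⟩ hyx
  · constructor
    · rw [Finset.disjoint_left]
      intro x hx hy
      rw [Finset.mem_image] at hx
      obtain ⟨y, hy', hyx⟩ := hx
      rw [pkO, Finset.mem_filter] at hy'
      rw [pkE, Finset.mem_filter] at hy
      exact image_not_peak π ⟨hy.2.1, hy.2.2.1⟩ ⟨hy'.2.1, hy'.2.2.1⟩ hyx
    · exact (Finset.disjoint_image π.injective).2 (disj_pkO_pkE π)

lemma cpk_bound : 2 * cpko m π + 2 * cpke m π ≤ m := by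
  have h1 := Finset.card_le_univ (slA π ∪ slB π)
  rw [Finset.card_union_of_disjoint (disj_slA_slB π), card_slA, card_slB] at h1
  simpa using h1

lemma mem_slA_iff (k : Fin m) :
    ((π.symm k < k ∧ π k < k ∧ Odd ((k : ℕ)+1))
      ∨ (π.symm (π.symm k) < π.symm k ∧ k < π.symm k ∧ Odd ((π.symm k : ℕ)+1)))
    ↔ k ∈ slA π := by
  rw [slA, Finset.mem_union, Finset.mem_image]
  constructor
  · rintro (h | h)
    · exact Or.inl (by rw [pkO, Finset.mem_filter]; exact ⟨Finset.mem_univ _, h⟩)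
    · refine Or.inr ⟨π.symm k, ?_, Equiv.apply_symm_apply _ _⟩
      rw [pkO, Finset.mem_filter]
      refine ⟨Finset.mem_univ _, h.1, ?_, h.2.2⟩
      rw [Equiv.apply_symm_apply]; exact h.2.1
  · rintro (h | ⟨y, hy, hyk⟩)
    · rw [pkO, Finset.mem_filter] at h; exact Or.inl h.2
    · rw [pkO, Finset.mem_filter] at hy
      right
      have hsy : π.symm k = y := by rw [← hyk, Equiv.symm_apply_apply]
      rw [hsy]
      exact ⟨hy.2.1, hyk ▸ hy.2.2.1, hy.2.2.2⟩

lemma mem_slB_iff (k : Fin m) :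
    ((π.symm k < k ∧ π k < k ∧ Even ((k : ℕ)+1))
      ∨ (π.symm (π.symm k) < π.symm k ∧ k < π.symm k ∧ Even ((π.symm k : ℕ)+1)))
    ↔ k ∈ slB π := by
  rw [slB, Finset.mem_union, Finset.mem_image]
  constructor
  · rintro (h | h)
    · exact Or.inl (by rw [pkE, Finset.mem_filter]; exact ⟨Finset.mem_univ _, h⟩)
    · refine Or.inr ⟨π.symm k, ?_, Equiv.apply_symm_apply _ _⟩
      rw [pkE, Finset.mem_filter]
      refine ⟨Finset.mem_univ _, h.1, ?_, h.2.2⟩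
      rw [Equiv.apply_symm_apply]; exact h.2.1
  · rintro (h | ⟨y, hy, hyk⟩)
    · rw [pkE, Finset.mem_filter] at h; exact Or.inl h.2
    · rw [pkE, Finset.mem_filter] at hy
      right
      have hsy : π.symm k = y := by rw [← hyk, Equiv.symm_apply_apply]
      rw [hsy]
      exact ⟨hy.2.1, hyk ▸ hy.2.2.1, hy.2.2.2⟩

lemma cpko_ins_some (k : Fin m) :
    cpko (m+1) (ins (some k) π) + (if k ∈ slA π then 1 else 0)
      = cpko m π + (if Odd (m+1) then 1 else 0) := by
  have h := cpk_ins_some Odd π k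
  rw [if_congr (mem_slA_iff π k) rfl rfl] at h
  rw [cpko_eq_cpk, cpko_eq_cpk]
  exact h

lemma cpke_ins_some (k : Fin m) :
    cpke (m+1) (ins (some k) π) + (if k ∈ slB π then 1 else 0)
      = cpke m π + (if Even (m+1) then 1 else 0) := by
  have h := cpk_ins_some Even π k
  rw [if_congr (mem_slB_iff π k) rfl rfl] at h
  rw [cpke_eq_cpk, cpke_eq_cpk]
  exact h

end cards

/- ### The exponent statistic -/

noncomputable def expo (m : ℕ) (π : Perm (Fin m)) : Fin 3 →₀ ℕ :=
  if Even m then sgl (2 * cpko m π + 1) (2 * cpke m π) (m - 2 * cpko m π - 2 * cpke m π)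
  else sgl (2 * cpko m π) (2 * cpke m π + 1) (m - 2 * cpko m π - 2 * cpke m π)

lemma nat_mono (n : ℕ) (s : Fin 3 →₀ ℕ) :
    (monomial s ((n : ℤ))) = n • monomial s (1 : ℤ) := by
  rw [← map_nsmul]
  norm_num

/- ### The key step -/

lemma step (m : ℕ) (π : Perm (Fin m)) :
    DJ (monomial (expo m π) 1)
      = ∑ c : Option (Fin m), monomial (expo (m+1) (ins c π)) (1 : ℤ) := by
  have hbound := cpk_bound π
  set i := cpko m π with hi
  set j := cpke m π with hj
  have hrest_card : (Finset.univ \ (slA π ∪ slB π)).card = m - 2*i - 2*j := by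
    rw [Finset.card_sdiff_of_subset (Finset.subset_univ _),
      Finset.card_union_of_disjoint (disj_slA_slB π), card_slA, card_slB]
    simp only [Finset.card_univ, Fintype.card_fin, ← hi, ← hj]
    omega
  have hAcard : (slA π).card = 2*i := by rw [card_slA, hi]
  have hBcard : (slB π).card = 2*j := by rw [card_slB, hj]
  -- sum over Option
  rw [univ_option, Finset.sum_insertNone]
  -- split the Fin m sum into slA, slB, rest
  rw [← Finset.sum_sdiff (Finset.subset_univ (slA π ∪ slB π)), Finset.sum_union (disj_slA_slB π)]
  rcases Nat.even_or_odd m with hm | hm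
  · -- m even
    have hodd1 : Odd (m+1) := Even.add_one hm
    have hnev1 : ¬ Even (m+1) := by
      rw [Nat.even_add_one]; exact fun h => h hm
    have hnone : expo (m+1) (ins none π) = sgl (2*i) (2*j+1) ((m - 2*i - 2*j)+1) := by
      rw [expo, if_neg hnev1, cpko_eq_cpk, cpk_ins_none, cpke_eq_cpk, cpk_ins_none,
        ← cpko_eq_cpk, ← cpke_eq_cpk, ← hi, ← hj]
      exact sgl_congr rfl rfl (by omega)
    have hA : ∀ k ∈ slA π, expo (m+1) (ins (some k) π) = sgl (2*i) (2*j+1) ((m - 2*i - 2*j)+1) := by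
      intro k hk
      have h1 := cpko_ins_some π k
      have h2 := cpke_ins_some π k
      rw [if_pos hk, if_pos hodd1] at h1
      rw [if_neg (Finset.disjoint_left.1 (disj_slA_slB π) hk), if_neg hnev1] at h2
      rw [expo, if_neg hnev1]
      exact sgl_congr (by omega) (by omega) (by omega)
    have hB : ∀ k ∈ slB π, expo (m+1) (ins (some k) π) = sgl (2*i+2) (2*j-1) ((m - 2*i - 2*j)+1) := by
      intro k hk
      have h1 := cpko_ins_some π k
      have h2 := cpke_ins_some π k
      rw [if_neg (Finset.disjoint_right.1 (disj_slA_slB π) hk), if_pos hodd1] at h1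
      rw [if_pos hk, if_neg hnev1] at h2
      rw [expo, if_neg hnev1]
      exact sgl_congr (by omega) (by omega) (by omega)
    have hR : ∀ k ∈ Finset.univ \ (slA π ∪ slB π),
        expo (m+1) (ins (some k) π) = sgl (2*i+2) (2*j+1) ((m - 2*i - 2*j)-1) := by
      intro k hk
      rw [Finset.mem_sdiff, Finset.mem_union] at hk
      have h1 := cpko_ins_some π k
      have h2 := cpke_ins_some π k
      rw [if_neg (fun h => hk.2 (Or.inl h)), if_pos hodd1] at h1
      rw [if_neg (fun h => hk.2 (Or.inr h)), if_neg hnev1] at h2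
      rw [expo, if_neg hnev1]
      exact sgl_congr (by omega) (by omega) (by omega)
    have sA : ∑ x ∈ slA π, (monomial (expo (m+1) (ins (some x) π)) (1:ℤ))
        = (2*i) • monomial (sgl (2*i) (2*j+1) ((m - 2*i - 2*j)+1)) (1:ℤ) := by
      rw [Finset.sum_congr rfl (fun k hk => by rw [hA k hk]), Finset.sum_const, hAcard]
    have sB : ∑ x ∈ slB π, (monomial (expo (m+1) (ins (some x) π)) (1:ℤ))
        = (2*j) • monomial (sgl (2*i+2) (2*j-1) ((m - 2*i - 2*j)+1)) (1:ℤ) := by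
      rw [Finset.sum_congr rfl (fun k hk => by rw [hB k hk]), Finset.sum_const, hBcard]
    have sR : ∑ x ∈ Finset.univ \ (slA π ∪ slB π), (monomial (expo (m+1) (ins (some x) π)) (1:ℤ))
        = (m - 2*i - 2*j) • monomial (sgl (2*i+2) (2*j+1) ((m - 2*i - 2*j)-1)) (1:ℤ) := by
      rw [Finset.sum_congr rfl (fun k hk => by rw [hR k hk]), Finset.sum_const, hrest_card]
    rw [sA, sB, sR, hnone]
    have hexpo : expo m π = sgl (2*i+1) (2*j) (m - 2*i - 2*j) := by
      rw [expo, if_pos hm, ← hi, ← hj]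
    rw [hexpo, DJ_mono]
    rw [nat_mono, nat_mono, nat_mono]
    have e1 : sgl (2*i+1-1) (2*j+1) ((m-2*i-2*j)+1) = sgl (2*i) (2*j+1) ((m-2*i-2*j)+1) :=
      sgl_congr (by omega) rfl rfl
    have e2 : sgl (2*i+1+1) (2*j-1) ((m-2*i-2*j)+1) = sgl (2*i+2) (2*j-1) ((m-2*i-2*j)+1) :=
      sgl_congr (by omega) rfl rfl
    have e3 : sgl (2*i+1+1) (2*j+1) ((m-2*i-2*j)-1) = sgl (2*i+2) (2*j+1) ((m-2*i-2*j)-1) :=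
      sgl_congr (by omega) rfl rfl
    rw [e1, e2, e3]
    rw [succ_nsmul]
    abel
  · -- m odd
    have hev1 : Even (m+1) := Odd.add_one hm
    have hno1 : ¬ Odd (m+1) := by
      rw [Nat.not_odd_iff_even]; exact hev1
    have hnevm : ¬ Even m := Nat.not_even_iff_odd.2 hm
    have hnone : expo (m+1) (ins none π) = sgl (2*i+1) (2*j) ((m - 2*i - 2*j)+1) := by
      rw [expo, if_pos hev1, cpko_eq_cpk, cpk_ins_none, cpke_eq_cpk, cpk_ins_none,
        ← cpko_eq_cpk, ← cpke_eq_cpk, ← hi, ← hj]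
      exact sgl_congr rfl rfl (by omega)
    have hA : ∀ k ∈ slA π, expo (m+1) (ins (some k) π) = sgl (2*i-1) (2*j+2) ((m - 2*i - 2*j)+1) := by
      intro k hk
      have h1 := cpko_ins_some π k
      have h2 := cpke_ins_some π k
      rw [if_pos hk, if_neg hno1] at h1
      rw [if_neg (Finset.disjoint_left.1 (disj_slA_slB π) hk), if_pos hev1] at h2
      rw [expo, if_pos hev1]
      -- here cpko (m+1) = i - 1 and i ≥ 1 (since h1 : cpko+1 = i)
      exact sgl_congr (by omega) (by omega) (by omega)
    have hB : ∀ k ∈ slB π, expo (m+1) (ins (some k) π) = sgl (2*i+1) (2*j) ((m - 2*i - 2*j)+1) := by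
      intro k hk
      have h1 := cpko_ins_some π k
      have h2 := cpke_ins_some π k
      rw [if_neg (Finset.disjoint_right.1 (disj_slA_slB π) hk), if_neg hno1] at h1
      rw [if_pos hk, if_pos hev1] at h2
      rw [expo, if_pos hev1]
      exact sgl_congr (by omega) (by omega) (by omega)
    have hR : ∀ k ∈ Finset.univ \ (slA π ∪ slB π),
        expo (m+1) (ins (some k) π) = sgl (2*i+1) (2*j+2) ((m - 2*i - 2*j)-1) := by
      intro k hk
      rw [Finset.mem_sdiff, Finset.mem_union] at hk
      have h1 := cpko_ins_some π k
      have h2 := cpke_ins_some π k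
      rw [if_neg (fun h => hk.2 (Or.inl h)), if_neg hno1] at h1
      rw [if_neg (fun h => hk.2 (Or.inr h)), if_pos hev1] at h2
      rw [expo, if_pos hev1]
      exact sgl_congr (by omega) (by omega) (by omega)
    have sA : ∑ x ∈ slA π, (monomial (expo (m+1) (ins (some x) π)) (1:ℤ))
        = (2*i) • monomial (sgl (2*i-1) (2*j+2) ((m - 2*i - 2*j)+1)) (1:ℤ) := by
      rw [Finset.sum_congr rfl (fun k hk => by rw [hA k hk]), Finset.sum_const, hAcard]
    have sB : ∑ x ∈ slB π, (monomial (expo (m+1) (ins (some x) π)) (1:ℤ))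
        = (2*j) • monomial (sgl (2*i+1) (2*j) ((m - 2*i - 2*j)+1)) (1:ℤ) := by
      rw [Finset.sum_congr rfl (fun k hk => by rw [hB k hk]), Finset.sum_const, hBcard]
    have sR : ∑ x ∈ Finset.univ \ (slA π ∪ slB π), (monomial (expo (m+1) (ins (some x) π)) (1:ℤ))
        = (m - 2*i - 2*j) • monomial (sgl (2*i+1) (2*j+2) ((m - 2*i - 2*j)-1)) (1:ℤ) := by
      rw [Finset.sum_congr rfl (fun k hk => by rw [hR k hk]), Finset.sum_const, hrest_card]
    rw [sA, sB, sR, hnone]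
    have hexpo : expo m π = sgl (2*i) (2*j+1) (m - 2*i - 2*j) := by
      rw [expo, if_neg hnevm, ← hi, ← hj]
    rw [hexpo, DJ_mono]
    rw [nat_mono, nat_mono, nat_mono]
    have e1 : sgl (2*i-1) (2*j+1+1) ((m-2*i-2*j)+1) = sgl (2*i-1) (2*j+2) ((m-2*i-2*j)+1) :=
      sgl_congr rfl (by omega) rfl
    have e2 : sgl (2*i+1) (2*j+1-1) ((m-2*i-2*j)+1) = sgl (2*i+1) (2*j) ((m-2*i-2*j)+1) :=
      sgl_congr rfl (by omega) rfl
    have e3 : sgl (2*i+1) (2*j+1+1) ((m-2*i-2*j)-1) = sgl (2*i+1) (2*j+2) ((m-2*i-2*j)-1) :=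
      sgl_congr rfl (by omega) rfl
    rw [e1, e2, e3]
    rw [succ_nsmul]
    abel

/- ### The main identity -/

lemma DJ_iter (m : ℕ) :
    (fun p => DJ p)^[m] (X 0)
      = ∑ π : Perm (Fin m), monomial (expo m π) (1 : ℤ) := by
  induction m with
  | zero =>
      rw [Function.iterate_zero_apply]
      have h1 : ∀ π : Perm (Fin 0), expo 0 π = sgl 1 0 0 := by
        intro π
        rw [expo, if_pos (Even.zero)]
        have : cpko 0 π = 0 := by
          rw [cpko]
          simp
        have h2 : cpke 0 π = 0 := by
          rw [cpke]
          simp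
        rw [this, h2]
      rw [Finset.sum_congr rfl (fun π _ => by rw [h1 π]), Finset.sum_const]
      have : (Finset.univ : Finset (Perm (Fin 0))).card = 1 := by
        simp
      rw [this, one_smul]
      have : (X 0 : MvPolynomial (Fin 3) ℤ) = monomial (Finsupp.single 0 1) 1 := by
        rw [X]
      rw [this]
      have hsgl : sgl 1 0 0 = Finsupp.single 0 1 := by
        ext v
        fin_cases v <;> simp [sgl, Finsupp.single_apply]
      rw [hsgl]
  | succ m ih =>
      rw [Function.iterate_succ_apply', ih, map_sum]
      have hstep : ∑ π : Perm (Fin m), DJ (monomial (expo m π) 1)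
          = ∑ π : Perm (Fin m), ∑ c : Option (Fin m),
              monomial (expo (m+1) (ins c π)) (1 : ℤ) :=
        Finset.sum_congr rfl fun π _ => step m π
      rw [hstep]
      rw [Finset.sum_comm]
      have := Equiv.sum_comp (insE m).symm
        (fun σ => monomial (expo (m+1) σ) (1 : ℤ))
      rw [← this, Fintype.sum_prod_type]
      rfl

/- ### Main theorem -/

/-- For `n ≥ 1` and all `i, j ≥ 0`, the coefficient of `x^{2i+1} y^{2j} z^{2n-2i-2j}` in
`D_J^{2n}(x)` equals the number of permutations `π` of `[2n]` with `cpk^o(π) = i` and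
`cpk^e(π) = j`. -/
theorem stmt7 (n : ℕ) (hn : 1 ≤ n) (i j : ℕ) :
    MvPolynomial.coeff
        (Finsupp.single (0 : Fin 3) (2 * i + 1) + Finsupp.single (1 : Fin 3) (2 * j) +
          Finsupp.single (2 : Fin 3) (2 * n - 2 * i - 2 * j))
        ((fun p => DJ p)^[2 * n] (X 0)) =
      ((Finset.univ.filter fun π : Equiv.Perm (Fin (2 * n)) =>
          cpko (2 * n) π = i ∧ cpke (2 * n) π = j).card : ℤ) := by
  rw [DJ_iter (2*n)]
  rw [coeff_sum]
  have htarget : Finsupp.single (0 : Fin 3) (2 * i + 1) + Finsupp.single (1 : Fin 3) (2 * j) +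
      Finsupp.single (2 : Fin 3) (2 * n - 2 * i - 2 * j) = sgl (2*i+1) (2*j) (2*n-2*i-2*j) := rfl
  rw [htarget]
  have hterm : ∀ π : Perm (Fin (2*n)),
      coeff (sgl (2*i+1) (2*j) (2*n-2*i-2*j)) (monomial (expo (2*n) π) (1 : ℤ))
        = if cpko (2*n) π = i ∧ cpke (2*n) π = j then 1 else 0 := by
    intro π
    rw [coeff_monomial]
    have hev : Even (2*n) := even_two_mul n
    have hiff : expo (2*n) π = sgl (2*i+1) (2*j) (2*n-2*i-2*j)
        ↔ (cpko (2*n) π = i ∧ cpke (2*n) π = j) := by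
      rw [expo, if_pos hev]
      constructor
      · intro h
        have h0 := congrArg (fun f : Fin 3 →₀ ℕ => f 0) h
        have h1 := congrArg (fun f : Fin 3 →₀ ℕ => f 1) h
        simp only [sgl_apply0, sgl_apply1] at h0 h1
        constructor <;> omega
      · rintro ⟨h1, h2⟩
        rw [h1, h2]
    rw [if_congr hiff rfl rfl]
  rw [Finset.sum_congr rfl (fun π _ => hterm π)]
  rw [Finset.sum_boole]
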